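/- Let K ≠ 2^[m] be a simplicial complex on [m] with m ≥ 4, and suppose the 1-skeleton of Bier(K) is chordal and {1,2} ∈ K. Then K has no ghost vertices and the 1-skeleton of K is the complete graph on [m]. -/

import Mathlib

open Finset

/-- A (finite abstract) simplicial complex on the vertex type `α`:
a set of finite subsets containing `∅` and closed under taking subsets. -/
def IsSimplicialComplex {α : Type*} (K : Set (Finset α)) : Prop :=
  ∅ ∈ K ∧ ∀ σ ∈ K, ∀ τ ⊆ σ, τ ∈ K

/-- The Alexander dual of `K` on `[m]`: `J ∈ K^∨` iff `[m] \ J ∉ K`. -/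
def dualK {m : ℕ} (K : Set (Finset (Fin m))) : Set (Finset (Fin m)) :=
  {J | Finset.univ \ J ∉ K}

/-- The Bier sphere of `K`: the deleted join of `K` and its Alexander dual,
on the vertex set `[m] ⊔ [m']` (encoded as `Fin m ⊕ Fin m`, `inl` = unprimed,
`inr` = primed). -/
def bier {m : ℕ} (K : Set (Finset (Fin m))) : Set (Finset (Fin m ⊕ Fin m)) :=
  {S | ∃ I J : Finset (Fin m), I ∈ K ∧ J ∈ dualK K ∧ Disjoint I J ∧
    S = I.map Function.Embedding.inl ∪ J.map Function.Embedding.inr}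

/-- The 1-skeleton graph of a simplicial complex. -/
def skeletonGraph {α : Type*} [DecidableEq α] (L : Set (Finset α)) :
    SimpleGraph α where
  Adj i j := i ≠ j ∧ ({i, j} : Finset α) ∈ L
  symm := ⟨fun i j h => ⟨h.1.symm, by rw [Finset.pair_comm]; exact h.2⟩⟩
  loopless := ⟨fun i h => h.1 rfl⟩

/-- A simplicial complex is chordal if its 1-skeleton contains no induced
(chordless) cycle of length at least `4`. -/
def ChordalComplex {α : Type*} [DecidableEq α] (L : Set (Finset α)) : Prop :=
  ∀ n : ℕ, 4 ≤ n → ∀ f : ZMod n → α, Function.Injective f →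
    ¬ (∀ i j : ZMod n,
        (skeletonGraph L).Adj (f i) (f j) ↔ (j = i + 1 ∨ i = j + 1))

section Helpers
variable {m : ℕ} {K : Set (Finset (Fin m))}

lemma mem_inl_union {I J : Finset (Fin m)} {x : Fin m} :
    Sum.inl x ∈ I.map Function.Embedding.inl ∪ J.map Function.Embedding.inr ↔ x ∈ I := by
  simp

lemma mem_inr_union {I J : Finset (Fin m)} {x : Fin m} :
    Sum.inr x ∈ I.map Function.Embedding.inl ∪ J.map Function.Embedding.inr ↔ x ∈ J := by
  simp

lemma bier_inl_pair (hK : IsSimplicialComplex K) (hKne : Finset.univ ∉ K) (i j : Fin m) :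
    ({Sum.inl i, Sum.inl j} : Finset (Fin m ⊕ Fin m)) ∈ bier K ↔ ({i, j} : Finset (Fin m)) ∈ K := by
  constructor
  · rintro ⟨I, J, hI, hJ, hd, hS⟩
    refine hK.2 I hI _ (fun x hx => ?_)
    have : Sum.inl x ∈ ({Sum.inl i, Sum.inl j} : Finset (Fin m ⊕ Fin m)) := by
      rcases mem_insert.mp hx with rfl | hx
      · exact mem_insert_self _ _
      · simp at hx; subst hx; simp
    rw [hS] at this
    exact mem_inl_union.mp this
  · intro h
    refine ⟨{i, j}, ∅, h, ?_, ?_, ?_⟩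
    · simpa [dualK] using hKne
    · simp
    · simp

lemma bier_inr_pair (hK : IsSimplicialComplex K) (i j : Fin m) :
    ({Sum.inr i, Sum.inr j} : Finset (Fin m ⊕ Fin m)) ∈ bier K ↔
      Finset.univ \ ({i, j} : Finset (Fin m)) ∉ K := by
  constructor
  · rintro ⟨I, J, hI, hJ, hd, hS⟩
    have hsub : ({i, j} : Finset (Fin m)) ⊆ J := by
      intro x hx
      have : Sum.inr x ∈ ({Sum.inr i, Sum.inr j} : Finset (Fin m ⊕ Fin m)) := by
        rcases mem_insert.mp hx with rfl | hx
        · exact mem_insert_self _ _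
        · simp at hx; subst hx; simp
      rw [hS] at this
      exact mem_inr_union.mp this
    intro hmem
    exact hJ (hK.2 _ hmem _ (sdiff_subset_sdiff Subset.rfl hsub))
  · intro h
    exact ⟨∅, {i, j}, hK.1, h, by simp, by simp⟩

lemma bier_mixed (hK : IsSimplicialComplex K) {i j : Fin m} (hij : i ≠ j) :
    ({Sum.inl i, Sum.inr j} : Finset (Fin m ⊕ Fin m)) ∈ bier K ↔
      (({i} : Finset (Fin m)) ∈ K ∧ Finset.univ \ ({j} : Finset (Fin m)) ∉ K) := by
  constructor
  · rintro ⟨I, J, hI, hJ, hd, hS⟩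
    have hiI : i ∈ I := by
      have : Sum.inl i ∈ I.map Function.Embedding.inl ∪ J.map Function.Embedding.inr := by
        rw [← hS]; simp
      exact mem_inl_union.mp this
    have hjJ : j ∈ J := by
      have : Sum.inr j ∈ I.map Function.Embedding.inl ∪ J.map Function.Embedding.inr := by
        rw [← hS]; simp
      exact mem_inr_union.mp this
    refine ⟨hK.2 I hI _ (by simpa using hiI), fun hmem => hJ ?_⟩
    exact hK.2 _ hmem _ (sdiff_subset_sdiff Subset.rfl (by simpa using hjJ))
  · rintro ⟨h1, h2⟩
    exact ⟨{i}, {j}, h1, h2, by simpa using hij, by ext x; simp⟩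

lemma bier_no_mixed_same (i : Fin m) :
    ({Sum.inl i, Sum.inr i} : Finset (Fin m ⊕ Fin m)) ∉ bier K := by
  rintro ⟨I, J, hI, hJ, hd, hS⟩
  have hiI : i ∈ I := mem_inl_union.mp (by rw [← hS]; simp)
  have hiJ : i ∈ J := mem_inr_union.mp (by rw [← hS]; simp)
  exact (Finset.disjoint_left.mp hd hiI) hiJ

end Helpers

lemma adj_iff {α : Type*} [DecidableEq α] (L : Set (Finset α)) (x y : α) :
    (skeletonGraph L).Adj x y ↔ x ≠ y ∧ ({x, y} : Finset α) ∈ L := Iff.rfl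

lemma no4 {α : Type*} [DecidableEq α] {L : Set (Finset α)} (hch : ChordalComplex L)
    (v0 v1 v2 v3 : α)
    (h01 : v0 ≠ v1) (h02 : v0 ≠ v2) (h03 : v0 ≠ v3)
    (h12 : v1 ≠ v2) (h13 : v1 ≠ v3) (h23 : v2 ≠ v3)
    (e01 : ({v0, v1} : Finset α) ∈ L) (e12 : ({v1, v2} : Finset α) ∈ L)
    (e23 : ({v2, v3} : Finset α) ∈ L) (e30 : ({v3, v0} : Finset α) ∈ L)
    (n02 : ({v0, v2} : Finset α) ∉ L) (n13 : ({v1, v3} : Finset α) ∉ L) : False := by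
  classical
  set f : ZMod 4 → α := fun i => if i = 0 then v0 else if i = 1 then v1 else if i = 2 then v2 else v3 with hf
  have hf0 : f 0 = v0 := by simp [hf]
  have hf1 : f 1 = v1 := by
    have h : (1 : ZMod 4) ≠ 0 := by decide
    simp [hf, h]
  have hf2 : f 2 = v2 := by
    have h : (2 : ZMod 4) ≠ 0 := by decide
    have h' : (2 : ZMod 4) ≠ 1 := by decide
    simp [hf, h, h']
  have hf3 : f 3 = v3 := by
    have h : (3 : ZMod 4) ≠ 0 := by decide
    have h' : (3 : ZMod 4) ≠ 1 := by decide
    have h'' : (3 : ZMod 4) ≠ 2 := by decide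
    simp [hf, h, h', h'']
  have quad : ∀ k : ZMod 4, k = 0 ∨ k = 1 ∨ k = 2 ∨ k = 3 := by decide
  have finj : Function.Injective f := by
    intro i j h
    rcases quad i with rfl | rfl | rfl | rfl <;> rcases quad j with rfl | rfl | rfl | rfl <;>
      simp_all
  refine hch 4 le_rfl f finj (fun i j => ?_)
  rcases quad i with rfl | rfl | rfl | rfl <;> rcases quad j with rfl | rfl | rfl | rfl <;>
    simp only [adj_iff, hf0, hf1, hf2, hf3] <;>
    first
    | exact iff_of_true ⟨h01, e01⟩ (by decide)
    | exact iff_of_true ⟨h12, e12⟩ (by decide)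
    | exact iff_of_true ⟨h23, e23⟩ (by decide)
    | exact iff_of_true ⟨h03, by rw [Finset.pair_comm]; exact e30⟩ (by decide)
    | exact iff_of_true ⟨h01.symm, by rw [Finset.pair_comm]; exact e01⟩ (by decide)
    | exact iff_of_true ⟨h12.symm, by rw [Finset.pair_comm]; exact e12⟩ (by decide)
    | exact iff_of_true ⟨h23.symm, by rw [Finset.pair_comm]; exact e23⟩ (by decide)
    | exact iff_of_true ⟨h03.symm, e30⟩ (by decide)
    | exact iff_of_false (fun h => h.1 rfl) (by decide)
    | exact iff_of_false (fun h => n02 h.2) (by decide)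
    | exact iff_of_false (fun h => n13 h.2) (by decide)
    | exact iff_of_false (fun h => n02 (by rw [Finset.pair_comm] at h; exact h.2)) (by decide)
    | exact iff_of_false (fun h => n13 (by rw [Finset.pair_comm] at h; exact h.2)) (by decide)

section Templates
variable {m : ℕ} {K : Set (Finset (Fin m))}

/-- Template 1: edge complement. -/
lemma T1 (hK : IsSimplicialComplex K) (hKne : Finset.univ ∉ K)
    (hch : ChordalComplex (bier K)) {a b : Fin m} (hab : a ≠ b)
    (he : ({a, b} : Finset (Fin m)) ∈ K) :
    Finset.univ \ ({a, b} : Finset (Fin m)) ∈ K := by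
  by_contra h
  have haq : ({a} : Finset (Fin m)) ∈ K := hK.2 _ he _ (by simp)
  have hbq : ({b} : Finset (Fin m)) ∈ K := hK.2 _ he _ (by simp)
  have hca : Finset.univ \ ({a} : Finset (Fin m)) ∉ K := fun hc =>
    h (hK.2 _ hc _ (sdiff_subset_sdiff Subset.rfl (by simp)))
  have hcb : Finset.univ \ ({b} : Finset (Fin m)) ∉ K := fun hc =>
    h (hK.2 _ hc _ (sdiff_subset_sdiff Subset.rfl (by simp)))
  exact no4 hch (Sum.inl a) (Sum.inl b) (Sum.inr a) (Sum.inr b)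
    (by simp [hab]) (by simp) (by simp) (by simp) (by simp [hab]) (by simp [hab])
    ((bier_inl_pair hK hKne a b).mpr he)
    ((bier_mixed hK hab.symm).mpr ⟨hbq, hca⟩)
    ((bier_inr_pair hK a b).mpr h)
    (by rw [Finset.pair_comm]; exact (bier_mixed hK hab).mpr ⟨haq, hcb⟩)
    (bier_no_mixed_same a) (bier_no_mixed_same b)

/-- Template 2: unprimed 4-cycle. -/
lemma T2 (hK : IsSimplicialComplex K) (hKne : Finset.univ ∉ K)
    (hch : ChordalComplex (bier K)) {x0 x1 x2 x3 : Fin m}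
    (h01 : x0 ≠ x1) (h02 : x0 ≠ x2) (h03 : x0 ≠ x3)
    (h12 : x1 ≠ x2) (h13 : x1 ≠ x3) (h23 : x2 ≠ x3)
    (e01 : ({x0, x1} : Finset (Fin m)) ∈ K) (e12 : ({x1, x2} : Finset (Fin m)) ∈ K)
    (e23 : ({x2, x3} : Finset (Fin m)) ∈ K) (e30 : ({x3, x0} : Finset (Fin m)) ∈ K)
    (n02 : ({x0, x2} : Finset (Fin m)) ∉ K) (n13 : ({x1, x3} : Finset (Fin m)) ∉ K) : False :=
  no4 hch (Sum.inl x0) (Sum.inl x1) (Sum.inl x2) (Sum.inl x3)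
    (by simp [h01]) (by simp [h02]) (by simp [h03]) (by simp [h12]) (by simp [h13]) (by simp [h23])
    ((bier_inl_pair hK hKne _ _).mpr e01) ((bier_inl_pair hK hKne _ _).mpr e12)
    ((bier_inl_pair hK hKne _ _).mpr e23) ((bier_inl_pair hK hKne _ _).mpr e30)
    (fun hmem => n02 ((bier_inl_pair hK hKne _ _).mp hmem))
    (fun hmem => n13 ((bier_inl_pair hK hKne _ _).mp hmem))

/-- Template 3: primed 4-cycle. -/
lemma T3 (hK : IsSimplicialComplex K)
    (hch : ChordalComplex (bier K)) {x0 x1 x2 x3 : Fin m}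
    (h01 : x0 ≠ x1) (h02 : x0 ≠ x2) (h03 : x0 ≠ x3)
    (h12 : x1 ≠ x2) (h13 : x1 ≠ x3) (h23 : x2 ≠ x3)
    (e01 : Finset.univ \ ({x0, x1} : Finset (Fin m)) ∉ K)
    (e12 : Finset.univ \ ({x1, x2} : Finset (Fin m)) ∉ K)
    (e23 : Finset.univ \ ({x2, x3} : Finset (Fin m)) ∉ K)
    (e30 : Finset.univ \ ({x3, x0} : Finset (Fin m)) ∉ K)
    (n02 : Finset.univ \ ({x0, x2} : Finset (Fin m)) ∈ K)
    (n13 : Finset.univ \ ({x1, x3} : Finset (Fin m)) ∈ K) : False :=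
  no4 hch (Sum.inr x0) (Sum.inr x1) (Sum.inr x2) (Sum.inr x3)
    (by simp [h01]) (by simp [h02]) (by simp [h03]) (by simp [h12]) (by simp [h13]) (by simp [h23])
    ((bier_inr_pair hK _ _).mpr e01) ((bier_inr_pair hK _ _).mpr e12)
    ((bier_inr_pair hK _ _).mpr e23) ((bier_inr_pair hK _ _).mpr e30)
    (fun hmem => (bier_inr_pair hK _ _).mp hmem n02)
    (fun hmem => (bier_inr_pair hK _ _).mp hmem n13)

lemma orp_swap23 {p q r s : Prop} (h : p ∨ q ∨ r ∨ s) : p ∨ r ∨ q ∨ s := by tauto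
lemma orp_cfde {p q r s : Prop} (h : p ∨ q ∨ r ∨ s) : p ∨ s ∨ q ∨ r := by tauto
lemma orp_decf {p q r s : Prop} (h : p ∨ q ∨ r ∨ s) : q ∨ r ∨ p ∨ s := by tauto
lemma orp_dfce {p q r s : Prop} (h : p ∨ q ∨ r ∨ s) : q ∨ s ∨ p ∨ r := by tauto
lemma orp_efcd {p q r s : Prop} (h : p ∨ q ∨ r ∨ s) : r ∨ s ∨ p ∨ q := by tauto
lemma orp_swap34 {p q r s : Prop} (h : p ∨ q ∨ r ∨ s) : p ∨ q ∨ s ∨ r := by tauto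

lemma quad_sdiff {p q r s : Fin m} (hU : ∀ t : Fin m, t = p ∨ t = q ∨ t = r ∨ t = s)
    (hpr : p ≠ r) (hps : p ≠ s) (hqr : q ≠ r) (hqs : q ≠ s) :
    (Finset.univ : Finset (Fin m)) \ {p, q} = {r, s} := by
  have hpr' := hpr.symm; have hps' := hps.symm; have hqr' := hqr.symm; have hqs' := hqs.symm
  ext t
  simp only [mem_sdiff, mem_univ, true_and, mem_insert, mem_singleton]
  constructor
  · intro ht
    rcases hU t with rfl | rfl | rfl | rfl <;> tauto
  · rintro (rfl | rfl) <;> tauto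

/-- The m = 4 endgame. -/
lemma endgame (hK : IsSimplicialComplex K) (hKne : Finset.univ ∉ K)
    (hch : ChordalComplex (bier K)) {c d e f : Fin m}
    (hcd : c ≠ d) (hef : e ≠ f) (hce : c ≠ e) (hcf : c ≠ f) (hde : d ≠ e) (hdf : d ≠ f)
    (hU : ∀ t : Fin m, t = c ∨ t = d ∨ t = e ∨ t = f)
    (ncd : ({c, d} : Finset (Fin m)) ∉ K) (nef : ({e, f} : Finset (Fin m)) ∉ K)
    (ece : ({c, e} : Finset (Fin m)) ∈ K) (edf : ({d, f} : Finset (Fin m)) ∈ K) : False := by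
  have hUce : ∀ t : Fin m, t = c ∨ t = e ∨ t = d ∨ t = f := fun t => orp_swap23 (hU t)
  have hUcf : ∀ t : Fin m, t = c ∨ t = f ∨ t = d ∨ t = e := fun t => orp_cfde (hU t)
  have hUde : ∀ t : Fin m, t = d ∨ t = e ∨ t = c ∨ t = f := fun t => orp_decf (hU t)
  have hUdf : ∀ t : Fin m, t = d ∨ t = f ∨ t = c ∨ t = e := fun t => orp_dfce (hU t)
  have hUef : ∀ t : Fin m, t = e ∨ t = f ∨ t = c ∨ t = d := fun t => orp_efcd (hU t)
  have s_cd : (Finset.univ : Finset (Fin m)) \ {c, d} = {e, f} := quad_sdiff hU hce hcf hde hdf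
  have s_ce : (Finset.univ : Finset (Fin m)) \ {c, e} = {d, f} := quad_sdiff hUce hcd hcf hde.symm hef
  have s_cf : (Finset.univ : Finset (Fin m)) \ {c, f} = {d, e} := quad_sdiff hUcf hcd hce hdf.symm hef.symm
  have s_de : (Finset.univ : Finset (Fin m)) \ {d, e} = {c, f} := quad_sdiff hUde hcd.symm hdf hce.symm hef
  have s_df : (Finset.univ : Finset (Fin m)) \ {d, f} = {c, e} := quad_sdiff hUdf hcd.symm hde hcf.symm hef.symm
  have s_ef : (Finset.univ : Finset (Fin m)) \ {e, f} = {c, d} := quad_sdiff hUef hce.symm hde.symm hcf.symm hdf.symm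
  by_cases hcfK : ({c, f} : Finset (Fin m)) ∈ K
  · have hdeK : ({d, e} : Finset (Fin m)) ∈ K := by
      have := T1 hK hKne hch hcf hcfK
      rwa [s_cf] at this
    exact T2 hK hKne hch hce hcd hcf (hde.symm) hef hdf
      ece (by rw [Finset.pair_comm]; exact hdeK) edf (by rw [Finset.pair_comm]; exact hcfK)
      ncd nef
  · have hdeK : ({d, e} : Finset (Fin m)) ∉ K := fun h => by
      have := T1 hK hKne hch hde h
      rw [s_de] at this
      exact hcfK this
    refine T3 hK hch hcd hce hcf hde hdf hef ?_ ?_ ?_ ?_ ?_ ?_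
    · rw [s_cd]; exact nef
    · rw [s_de]; exact hcfK
    · rw [s_ef]; exact ncd
    · rw [Finset.pair_comm, s_cf]; exact hdeK
    · rw [s_ce]; exact edf
    · rw [s_df]; exact ece

end Templates

/-- for `m ≥ 4`, if `Bier(K)` is chordal and `K` contains an
edge, then `K` has no ghost vertices and its 1-skeleton is the complete graph
on `[m]`. -/
theorem chordal_bier_with_edge {m : ℕ} (hm : 4 ≤ m) (K : Set (Finset (Fin m)))
    (hK : IsSimplicialComplex K) (hKne : Finset.univ ∉ K)
    (hch : ChordalComplex (bier K))
    (a b : Fin m) (hab : a ≠ b) (he : ({a, b} : Finset (Fin m)) ∈ K) :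
    (∀ i : Fin m, ({i} : Finset (Fin m)) ∈ K) ∧
    (∀ i j : Fin m, i ≠ j → ({i, j} : Finset (Fin m)) ∈ K) := by
  have hF0 : Finset.univ \ ({a, b} : Finset (Fin m)) ∈ K := T1 hK hKne hch hab he
  constructor
  · intro i
    by_cases hia : i = a
    · exact hK.2 _ he _ (by simp [hia])
    by_cases hib : i = b
    · exact hK.2 _ he _ (by simp [hib])
    · exact hK.2 _ hF0 _ (by simp [hia, hib])
  · intro c d hcd
    by_contra hnd
    -- Step A
    have stepA : ∀ x y : Fin m, x ≠ y → x ≠ c → x ≠ d → y ≠ c → y ≠ d →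
        ({x, y} : Finset (Fin m)) ∈ K → False := by
      intro x y hxy hxc hxd hyc hyd hxyK
      have hcomp := T1 hK hKne hch hxy hxyK
      refine hnd (hK.2 _ hcomp _ ?_)
      intro t ht
      simp only [mem_insert, mem_singleton] at ht
      simp only [mem_sdiff, mem_univ, true_and, mem_insert, mem_singleton]
      rcases ht with rfl | rfl
      · exact fun h => by rcases h with rfl | rfl; exact hxc rfl; exact hyc rfl
      · exact fun h => by rcases h with rfl | rfl; exact hxd rfl; exact hyd rfl
    -- a or b meets {c, d}
    have hmeet : a = c ∨ a = d ∨ b = c ∨ b = d := by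
      by_contra hcon
      push_neg at hcon
      exact stepA a b hab hcon.1 hcon.2.1 hcon.2.2.1 hcon.2.2.2 he
    rcases Nat.lt_or_ge m 5 with h5 | h5
    · -- m = 4
      have hm4 : m = 4 := by omega
      have hcard2 : ((Finset.univ : Finset (Fin m)) \ {c, d}).card = 2 := by
        rw [Finset.card_sdiff_of_subset (Finset.subset_univ _), Finset.card_pair hcd,
          Finset.card_univ, Fintype.card_fin]
        omega
      obtain ⟨e, f, hef, hEF⟩ := Finset.card_eq_two.mp hcard2
      have heM : e ∈ (Finset.univ : Finset (Fin m)) \ {c, d} := by rw [hEF]; simp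
      have hfM : f ∈ (Finset.univ : Finset (Fin m)) \ {c, d} := by rw [hEF]; simp
      have hec : e ≠ c := by have := (mem_sdiff.mp heM).2; simp at this; exact this.1
      have hed : e ≠ d := by have := (mem_sdiff.mp heM).2; simp at this; exact this.2
      have hfc : f ≠ c := by have := (mem_sdiff.mp hfM).2; simp at this; exact this.1
      have hfd : f ≠ d := by have := (mem_sdiff.mp hfM).2; simp at this; exact this.2
      have hEFK : ({e, f} : Finset (Fin m)) ∉ K := fun h => stepA e f hef hec hed hfc hfd h
      have hU : ∀ t : Fin m, t = c ∨ t = d ∨ t = e ∨ t = f := by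
        intro t
        by_cases h1 : t = c
        · tauto
        by_cases h2 : t = d
        · tauto
        · have : t ∈ (Finset.univ : Finset (Fin m)) \ {c, d} := by
            simp [h1, h2]
          rw [hEF] at this
          simp at this
          tauto
      have hUce : ∀ t : Fin m, t = c ∨ t = e ∨ t = d ∨ t = f := fun t => orp_swap23 (hU t)
      have hUcf : ∀ t : Fin m, t = c ∨ t = f ∨ t = d ∨ t = e := fun t => orp_cfde (hU t)
      have hUde : ∀ t : Fin m, t = d ∨ t = e ∨ t = c ∨ t = f := fun t => orp_decf (hU t)
      have hUdf : ∀ t : Fin m, t = d ∨ t = f ∨ t = c ∨ t = e := fun t => orp_dfce (hU t)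
      have s_ce : (Finset.univ : Finset (Fin m)) \ {c, e} = {d, f} :=
        quad_sdiff hUce hcd hfc.symm hed hef
      have s_cf : (Finset.univ : Finset (Fin m)) \ {c, f} = {d, e} :=
        quad_sdiff hUcf hcd hec.symm hfd hef.symm
      have s_de : (Finset.univ : Finset (Fin m)) \ {d, e} = {c, f} :=
        quad_sdiff hUde hcd.symm hfd.symm hec hef
      have s_df : (Finset.univ : Finset (Fin m)) \ {d, f} = {c, e} :=
        quad_sdiff hUdf hcd.symm hed.symm hfc hef.symm
      have compCE : ({c, e} : Finset (Fin m)) ∈ K → ({d, f} : Finset (Fin m)) ∈ K := fun h => by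
        have := T1 hK hKne hch hec.symm h; rwa [s_ce] at this
      have compCF : ({c, f} : Finset (Fin m)) ∈ K → ({d, e} : Finset (Fin m)) ∈ K := fun h => by
        have := T1 hK hKne hch hfc.symm h; rwa [s_cf] at this
      have compDE : ({d, e} : Finset (Fin m)) ∈ K → ({c, f} : Finset (Fin m)) ∈ K := fun h => by
        have := T1 hK hKne hch hed.symm h; rwa [s_de] at this
      have compDF : ({d, f} : Finset (Fin m)) ∈ K → ({c, e} : Finset (Fin m)) ∈ K := fun h => by
        have := T1 hK hKne hch hfd.symm h; rwa [s_df] at this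
      have hor : (({c, e} : Finset (Fin m)) ∈ K ∧ ({d, f} : Finset (Fin m)) ∈ K) ∨
          (({c, f} : Finset (Fin m)) ∈ K ∧ ({d, e} : Finset (Fin m)) ∈ K) := by
        rcases hU a with rfl | rfl | rfl | rfl <;> rcases hU b with rfl | rfl | rfl | rfl
        · exact absurd rfl hab
        · exact absurd he hnd
        · exact Or.inl ⟨he, compCE he⟩
        · exact Or.inr ⟨he, compCF he⟩
        · rw [Finset.pair_comm] at he; exact absurd he hnd
        · exact absurd rfl hab
        · exact Or.inr ⟨compDE he, he⟩
        · exact Or.inl ⟨compDF he, he⟩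
        · rw [Finset.pair_comm] at he; exact Or.inl ⟨he, compCE he⟩
        · rw [Finset.pair_comm] at he; exact Or.inr ⟨compDE he, he⟩
        · exact absurd rfl hab
        · exact absurd he hEFK
        · rw [Finset.pair_comm] at he; exact Or.inr ⟨he, compCF he⟩
        · rw [Finset.pair_comm] at he; exact Or.inl ⟨compDF he, he⟩
        · rw [Finset.pair_comm] at he; exact absurd he hEFK
        · exact absurd rfl hab
      rcases hor with ⟨h1, h2⟩ | ⟨h1, h2⟩
      · exact endgame hK hKne hch hcd hef hec.symm hfc.symm hed.symm hfd.symm hU hnd hEFK h1 h2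
      · exact endgame hK hKne hch hcd hef.symm hfc.symm hec.symm hfd.symm hed.symm
          (fun t => orp_swap34 (hU t)) hnd (by rw [Finset.pair_comm]; exact hEFK) h1 h2
    · -- m ≥ 5
      have hint : (({a, b} : Finset (Fin m)) ∩ {c, d}).Nonempty := by
        rcases hmeet with rfl | rfl | rfl | rfl
        · exact ⟨a, by simp⟩
        · exact ⟨a, by simp⟩
        · exact ⟨b, by simp⟩
        · exact ⟨b, by simp⟩
      have hcu : (({a, b} : Finset (Fin m)) ∪ {c, d}).card ≤ 3 := by
        have h1 := Finset.card_union_add_card_inter ({a, b} : Finset (Fin m)) {c, d}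
        have h2 : ({a, b} : Finset (Fin m)).card = 2 := Finset.card_pair hab
        have h3 : ({c, d} : Finset (Fin m)).card = 2 := Finset.card_pair hcd
        have h4 : 1 ≤ (({a, b} : Finset (Fin m)) ∩ {c, d}).card := Finset.card_pos.mpr hint
        omega
      have h2le : 1 < ((Finset.univ : Finset (Fin m)) \ ({a, b} ∪ {c, d})).card := by
        rw [Finset.card_sdiff_of_subset (Finset.subset_univ _), Finset.card_univ, Fintype.card_fin]
        omega
      obtain ⟨x, hx, y, hy, hxy⟩ := Finset.one_lt_card.mp h2le
      simp only [mem_sdiff, mem_univ, true_and, mem_union, mem_insert, mem_singleton,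
        not_or] at hx hy
      have hxyK : ({x, y} : Finset (Fin m)) ∈ K := by
        refine hK.2 _ hF0 _ ?_
        intro t ht
        simp only [mem_insert, mem_singleton] at ht
        simp only [mem_sdiff, mem_univ, true_and, mem_insert, mem_singleton]
        rcases ht with rfl | rfl
        · exact fun h => by rcases h with rfl | rfl; exact hx.1.1 rfl; exact hx.1.2 rfl
        · exact fun h => by rcases h with rfl | rfl; exact hy.1.1 rfl; exact hy.1.2 rfl
      exact stepA x y hxy hx.2.1 hx.2.2 hy.2.1 hy.2.2 hxyK
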